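/- Soundness of Ax_BCL^{k,l,m,n}: fix natural numbers k, l, m, n with k ≤ m, l ≤ n and k, l even. For every Γ ⊆ For_BCL and A ∈ For_BCL, if Γ ⊢ A in Ax_BCL^{k,l,m,n}, then for every model ⟨v,R⟩ with R ∈ Rel^{k,l,m,n} in which every member of Γ is true, A is true. -/

import Mathlib

/-- Formulas of BCL: variables, negation, conjunction, disjunction, connexive implication. -/
inductive BForm : Type
  | var : ℕ → BForm
  | neg : BForm → BForm
  | conj : BForm → BForm → BForm
  | disj : BForm → BForm → BForm
  | imp : BForm → BForm → BForm
  deriving DecidableEq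

/-- Truth of a formula in a BCL model ⟨v, R⟩. -/
def bsat (v : ℕ → Bool) (R : BForm → BForm → Prop) : BForm → Prop
  | .var p => v p = true
  | .neg B => ¬ bsat v R B
  | .conj B C => bsat v R B ∧ bsat v R C
  | .disj B C => bsat v R B ∨ bsat v R C
  | .imp B C => (¬ bsat v R B ∨ bsat v R C) ∧ R B C

/-- Validity in a relation: true in ⟨v, R⟩ for every valuation v. -/
def bvalid (R : BForm → BForm → Prop) (A : BForm) : Prop :=
  ∀ v : ℕ → Bool, bsat v R A

def condA1 (R : BForm → BForm → Prop) : Prop := ∀ A, ¬ R A (.neg A)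
def condA2 (R : BForm → BForm → Prop) : Prop := ∀ A, ¬ R (.neg A) A
def condB0 (R : BForm → BForm → Prop) : Prop := ∀ A B, R A B → ¬ R A (.neg B)
def condB1 (R : BForm → BForm → Prop) : Prop :=
  ∀ A B, R (.imp A B) (.neg (.imp A (.neg B)))
def condB2 (R : BForm → BForm → Prop) : Prop :=
  ∀ A B, R (.imp A (.neg B)) (.neg (.imp A B))
def condCUN (R : BForm → BForm → Prop) : Prop := ∀ A B, R A B → R (.neg A) (.neg B)

/-- ¬^j A : the formula A prefixed by j negations. -/
def negs : ℕ → BForm → BForm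
  | 0, A => A
  | n + 1, A => .neg (negs n A)
/-- Material implication A ⊃ B, an abbreviation for ¬A ∨ B. -/
def bhimp (A B : BForm) : BForm := .disj (.neg A) B

/-- A is a substitution instance of a classical propositional tautology:
A evaluates to true under every Boolean valuation of formulas that treats
¬, ∧, ∨ classically (variables and →-formulas count as atoms). -/
def IsTautInst (A : BForm) : Prop :=
  ∀ e : BForm → Bool,
    (∀ B, e (.neg B) = !(e B)) →
    (∀ B C, e (.conj B C) = (e B && e C)) →
    (∀ B C, e (.disj B C) = (e B || e C)) →
    e A = true

/-- Axioms of Ax_BCL. -/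
inductive BAx : BForm → Prop
  | taut {A : BForm} : IsTautInst A → BAx A
  | a1 (A : BForm) : BAx (.neg (.imp A (.neg A)))
  | a2 (A : BForm) : BAx (.neg (.imp (.neg A) A))
  | b1 (A B : BForm) : BAx (.imp (.imp A B) (.neg (.imp A (.neg B))))
  | b2 (A B : BForm) : BAx (.imp (.imp A (.neg B)) (.neg (.imp A B)))
  | impAx (A B : BForm) : BAx (bhimp (.imp A B) (bhimp A B))

/-- Theorems of a Hilbert calculus with axioms Ax and modus ponens (for ⊃). -/
inductive BThm (Ax : BForm → Prop) : BForm → Prop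
  | ax {A : BForm} : Ax A → BThm Ax A
  | mp {A B : BForm} : BThm Ax A → BThm Ax (bhimp A B) → BThm Ax B

/-- Axioms of Ax_BCL-CUN : Ax_BCL plus (CUN1) and (CUN2). -/
inductive BAxCUN : BForm → Prop
  | base {A : BForm} : BAx A → BAxCUN A
  | cun1 (A B : BForm) :
      BAxCUN (bhimp (.imp A B) (.disj (.imp (.neg A) (.neg B)) (.conj (.neg A) B)))
  | cun2 (A B : BForm) :
      BAxCUN (bhimp (.imp A B) (.imp (.neg (.neg A)) (.neg (.neg B))))

/-- Axioms of Ax_BCL^{k,l,m,n} : Ax_BCL-CUN plus (GCUN1) and (GCUN2). -/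
inductive GAx (k l m n : ℕ) : BForm → Prop
  | base {A : BForm} : BAxCUN A → GAx k l m n A
  | gcun1 (A B : BForm) :
      GAx k l m n (bhimp (.imp (negs k A) (negs l B))
        (.disj (.imp (negs m A) (negs n B)) (.conj (negs m A) (negs (n + 1) B))))
  | gcun2 (A B : BForm) :
      GAx k l m n (bhimp (.imp (negs k A) (negs l B))
        (.imp (negs (2 * m - k) A) (negs (2 * n - l) B)))

/-- Derivability from a set of premises Γ by axioms and modus ponens. -/
inductive BDeriv (Ax : BForm → Prop) (Γ : Set BForm) : BForm → Prop
  | ax {A : BForm} : Ax A → BDeriv Ax Γ A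
  | prem {A : BForm} : A ∈ Γ → BDeriv Ax Γ A
  | mp {A B : BForm} : BDeriv Ax Γ A → BDeriv Ax Γ (bhimp A B) → BDeriv Ax Γ B

/-- The class Rel^{k,l,m,n}: relations satisfying (a1), (a2), (b0), (b1), (b2),
(cun) and cun_{k,l,m,n}. -/
def RelKLMN (k l m n : ℕ) (R : BForm → BForm → Prop) : Prop :=
  condA1 R ∧ condA2 R ∧ condB0 R ∧ condB1 R ∧ condB2 R ∧ condCUN R ∧
    ∀ A B, R (negs k A) (negs l B) → R (negs m A) (negs n B)

/-- Γ is consistent in the calculus with axioms Ax. -/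
def BConsistent (Ax : BForm → Prop) (Γ : Set BForm) : Prop :=
  ∃ A, ¬ BDeriv Ax Γ A

/-- Γ is maximal consistent in the calculus with axioms Ax. -/
def BMaxCon (Ax : BForm → Prop) (Γ : Set BForm) : Prop :=
  BConsistent Ax Γ ∧ ∀ Δ : Set BForm, Γ ⊂ Δ → ¬ BConsistent Ax Δ

/-- Valuation of the first canonical model of Γ : v(p) = 1 iff p ∈ Γ. -/
noncomputable def canonV (Γ : Set BForm) : ℕ → Bool :=
  fun p => @decide (BForm.var p ∈ Γ) (Classical.propDecidable _)

/-- Relating relation of the first canonical model of Γ : R(A,B) iff A→B ∈ Γ. -/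
def canonR (Γ : Set BForm) : BForm → BForm → Prop :=
  fun A B => BForm.imp A B ∈ Γ

/-- The relating relation R^¬ of the second canonical model of Γ : the least
relation containing the relation induced by the first canonical model
and closed under the (GCUN)- and (CUN)-style clauses. -/
inductive canonR2 (k l m n : ℕ) (Γ : Set BForm) : BForm → BForm → Prop
  | base {A B : BForm} :
      bsat (canonV Γ) (canonR Γ) (.imp A B) → canonR2 k l m n Γ A B
  | gcun {A B : BForm} :
      bsat (canonV Γ) (canonR Γ) (.imp (negs k A) (negs l B)) →
      bsat (canonV Γ) (canonR Γ) (.conj (negs m A) (negs (n + 1) B)) →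
      canonR2 k l m n Γ (negs m A) (negs n B)
  | cun {A B : BForm} :
      bsat (canonV Γ) (canonR Γ) (.imp A B) →
      bsat (canonV Γ) (canonR Γ) (.conj (.neg A) B) →
      canonR2 k l m n Γ (.neg A) (.neg B)

lemma negs_negs (a b : ℕ) (A : BForm) : negs a (negs b A) = negs (a + b) A := by
  induction a with
  | zero => simp [negs]
  | succ a ih =>
    rw [Nat.add_right_comm]
    show BForm.neg (negs a (negs b A)) = BForm.neg (negs (a + b) A)
    rw [ih]

lemma bsat_negs_even {v : ℕ → Bool} {R : BForm → BForm → Prop} {j : ℕ} (hj : Even j)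
    (A : BForm) : bsat v R (negs j A) ↔ bsat v R A := by
  obtain ⟨c, rfl⟩ := hj
  induction c with
  | zero => simp [negs]
  | succ c ih =>
    have h1 : c + 1 + (c + 1) = (c + c) + 1 + 1 := by ring
    rw [h1]
    show ¬ ¬ bsat v R (negs (c + c) A) ↔ _
    rw [not_not, ih]

lemma bsat_taut {v : ℕ → Bool} {R : BForm → BForm → Prop} {A : BForm}
    (h : IsTautInst A) : bsat v R A := by
  classical
  have := h (fun B => decide (bsat v R B))
    (by intro B; simp only [bsat]; by_cases hb : bsat v R B <;> simp [hb])
    (by intro B C; simp only [bsat]; by_cases hb : bsat v R B <;> by_cases hc : bsat v R C <;> simp [hb, hc])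
    (by intro B C; simp only [bsat]; by_cases hb : bsat v R B <;> by_cases hc : bsat v R C <;> simp [hb, hc])
  simpa using this

lemma gax_valid (k l m n : ℕ) (hkm : k ≤ m) (hln : l ≤ n)
    (hk : Even k) (hl : Even l) {A : BForm} (hA : GAx k l m n A)
    (v : ℕ → Bool) (R : BForm → BForm → Prop) (hR : RelKLMN k l m n R) :
    bsat v R A := by
  obtain ⟨ha1, ha2, hb0, hb1, hb2, hcun, hklmn⟩ := hR
  cases hA with
  | base hA =>
    cases hA with
    | base hA =>
      cases hA with
      | taut h => exact bsat_taut h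
      | a1 A => exact fun h => ha1 A h.2
      | a2 A => exact fun h => ha2 A h.2
      | b1 A B =>
        refine ⟨?_, hb1 A B⟩
        by_cases h : bsat v R (.imp A B)
        · exact Or.inr (fun h' => hb0 A B h.2 h'.2)
        · exact Or.inl h
      | b2 A B =>
        refine ⟨?_, hb2 A B⟩
        by_cases h : bsat v R (.imp A (.neg B))
        · exact Or.inr (fun h' => hb0 A B h'.2 h.2)
        · exact Or.inl h
      | impAx A B =>
        by_cases h : bsat v R (.imp A B)
        · exact Or.inr h.1
        · exact Or.inl h
    | cun1 A B =>
      by_cases h : bsat v R (.imp A B)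
      · refine Or.inr ?_
        have hRc : R (.neg A) (.neg B) := hcun A B h.2
        by_cases hA : bsat v R A
        · exact Or.inl ⟨Or.inl (fun hn => hn hA), hRc⟩
        · by_cases hB : bsat v R B
          · exact Or.inr ⟨hA, hB⟩
          · exact Or.inl ⟨Or.inr hB, hRc⟩
      · exact Or.inl h
    | cun2 A B =>
      by_cases h : bsat v R (.imp A B)
      · refine Or.inr ⟨?_, hcun _ _ (hcun A B h.2)⟩
        rcases h.1 with h' | hB
        · exact Or.inl (fun hnn => hnn (fun hA => h' hA))
        · exact Or.inr (fun hn => hn hB)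
      · exact Or.inl h
  | gcun1 A B =>
    by_cases h : bsat v R (.imp (negs k A) (negs l B))
    · refine Or.inr ?_
      have hRc : R (negs m A) (negs n B) := hklmn A B h.2
      by_cases hB : bsat v R (negs n B)
      · exact Or.inl ⟨Or.inr hB, hRc⟩
      · by_cases hA : bsat v R (negs m A)
        · exact Or.inr ⟨hA, hB⟩
        · exact Or.inl ⟨Or.inl hA, hRc⟩
    · exact Or.inl h
  | gcun2 A B =>
    by_cases h : bsat v R (.imp (negs k A) (negs l B))
    · refine Or.inr ⟨?_, ?_⟩
      · have hek : Even (2 * m - k) := by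
          obtain ⟨a, rfl⟩ := hk
          obtain ⟨c, hc⟩ : ∃ c, 2 * m - (a + a) = c + c :=
            ⟨m - a, by omega⟩
          exact hc ▸ ⟨c, rfl⟩
        have hel : Even (2 * n - l) := by
          obtain ⟨a, rfl⟩ := hl
          obtain ⟨c, hc⟩ : ∃ c, 2 * n - (a + a) = c + c :=
            ⟨n - a, by omega⟩
          exact hc ▸ ⟨c, rfl⟩
        rcases h.1 with h' | hB
        · refine Or.inl (fun hA => h' ?_)
          exact (bsat_negs_even hk A).mpr ((bsat_negs_even hek A).mp hA)
        · exact Or.inr ((bsat_negs_even hel B).mpr ((bsat_negs_even hl B).mp hB))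
      · have := hklmn (negs (m - k) A) (negs (n - l) B)
        rw [negs_negs, negs_negs, negs_negs, negs_negs] at this
        have h1 : k + (m - k) = m := by omega
        have h2 : l + (n - l) = n := by omega
        have h3 : m + (m - k) = 2 * m - k := by omega
        have h4 : n + (n - l) = 2 * n - l := by omega
        rw [h1, h2, h3, h4] at this
        exact this (hklmn A B h.2)
    · exact Or.inl h

/-- Soundness of Ax_BCL^{k,l,m,n}: whatever is derivable from Γ is a semantic
consequence of Γ over models based on relations in Rel^{k,l,m,n}. -/
theorem gbcl_soundness (k l m n : ℕ) (hkm : k ≤ m) (hln : l ≤ n)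
    (hk : Even k) (hl : Even l) (Γ : Set BForm) (A : BForm)
    (h : BDeriv (GAx k l m n) Γ A) :
    ∀ (v : ℕ → Bool) (R : BForm → BForm → Prop), RelKLMN k l m n R →
      (∀ B ∈ Γ, bsat v R B) → bsat v R A := by
  intro v R hR hΓ
  induction h with
  | ax hA => exact gax_valid k l m n hkm hln hk hl hA v R hR
  | prem hA => exact hΓ _ hA
  | mp _ _ ihA ihAB =>
    rcases ihAB with h' | hB
    · exact absurd ihA h'
    · exact hB
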